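/- Let (K,⊔,⊓,0,1) be a finite lattice semiring, τ a finite relational vocabulary and k ∈ ω. Then for every K-interpretation π: Lit_A(τ) → K with the k-extension property, every formula ψ(x_1,…,x_i) ∈ FO^k(τ) (at most k variables) and every tuple ā = (a_1,…,a_i) of pairwise distinct elements of A: π⟦ψ(ā)⟧ = f_ψ[ρ^π_ā], where f_ψ is evaluated with e ↦ ε_K and X_β ↦ ρ^π_ā(β). -/

import Mathlib

open MeasureTheory Filter Set
open scoped ENNReal BigOperators

/-- A (fully instantiated) literal over the relational vocabulary given by the
relation symbols `R` with arities `ar`, on the universe `A`: a relation symbol,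
a tuple of arguments, and a polarity (`true` = positive atom, `false` = negated atom). -/
structure Lit (R : Type) (ar : R → ℕ) (A : Type) : Type where
  rel : R
  args : Fin (ar rel) → A
  pos : Bool

/-- A (fully instantiated) relational atom. -/
abbrev Atoms (R : Type) (ar : R → ℕ) (A : Type) : Type := (r : R) × (Fin (ar r) → A)

variable {R : Type} {ar : R → ℕ} {A B K : Type}

/-- Renaming of a literal along a map of universes. -/
def Lit.map (f : A → B) (l : Lit R ar A) : Lit R ar B :=
  ⟨l.rel, fun j => f (l.args j), l.pos⟩

/-- A `K`-interpretation (or atomic type) is model-defining / consistent (w.r.t. the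
zero element `z` of `K`) if out of each pair of complementary literals exactly one is
mapped to `z`. -/
def ModelDefining (z : K) (π : Lit R ar A → K) : Prop :=
  ∀ (r : R) (as : Fin (ar r) → A), (π ⟨r, as, true⟩ = z ↔ π ⟨r, as, false⟩ ≠ z)

/-- The atomic `m`-type realised by the tuple `a` in the interpretation `π`. -/
def typeOf {m : ℕ} (π : Lit R ar A → K) (a : Fin m → A) : Lit R ar (Fin m) → K :=
  fun l => π (l.map a)

/-- The tuple `a` (of pairwise distinct elements) realises the atomic `m`-type `ρ` in `π`. -/
def Realizes {m : ℕ} (π : Lit R ar A → K) (a : Fin m → A) (ρ : Lit R ar (Fin m) → K) : Prop :=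
  Function.Injective a ∧ typeOf π a = ρ

/-- The atomic `(m+1)`-type `ρp` extends the atomic `m`-type `ρ`. -/
def Extends {m : ℕ} (ρp : Lit R ar (Fin (m+1)) → K) (ρ : Lit R ar (Fin m) → K) : Prop :=
  ∀ l : Lit R ar (Fin m), ρp (l.map Fin.castSucc) = ρ l

/-- The `k`-extension property of an interpretation `π` (with zero element `z`). -/
def ExtProp (z : K) (π : Lit R ar A → K) (k : ℕ) : Prop :=
  ∀ m, m < k → ∀ ρ : Lit R ar (Fin m) → K, ModelDefining z ρ →
    ∀ ρp : Lit R ar (Fin (m+1)) → K, ModelDefining z ρp → Extends ρp ρ →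
      ∀ a : Fin m → A, Realizes π a ρ →
        ∃ b : A, b ∉ Set.range a ∧ Realizes π (Fin.snoc a b) ρp

/-- A sequence of extended nonnegative reals converges to `L` exponentially fast. -/
def ExpConv (f : ℕ → ℝ≥0∞) (L : ℝ≥0∞) : Prop :=
  ∃ C q : ℝ≥0∞, C ≠ ⊤ ∧ q < 1 ∧ ∀ n, f n ≤ L + C * q ^ n ∧ L ≤ f n + C * q ^ n

/-- The interpretation determined by a sample point: each atom gets a pair
(value of positive literal, value of negated literal). -/
def interpOf (ω : Atoms R ar A → K × K) : Lit R ar A → K :=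
  fun l => if l.pos then (ω ⟨l.rel, l.args⟩).1 else (ω ⟨l.rel, l.args⟩).2

/-- The per-atom distribution: with probability 1/2 the atom is true (its negation
gets value `z`, i.e. false, and its value is sampled from `p`), with probability 1/2
it is false (symmetrically). -/
noncomputable def atomMeasure [MeasurableSpace K] (z : K) (p : Measure K) : Measure (K × K) :=
  (2⁻¹ : ℝ≥0∞) • (Measure.map (fun j => (j, z)) p + Measure.map (fun j => (z, j)) p)

/-- The distribution `μ_{n,p}` of random `K`-interpretations on universe `[n]`,
presented on the sample space assigning to each atom the pair of values of its
positive and negated literal. -/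
noncomputable def muI [MeasurableSpace K] [Fintype R] (z : K) (p : Measure K) (n : ℕ) :
    Measure (Atoms R ar (Fin n) → K × K) :=
  Measure.pi fun _ => atomMeasure z p
/-- First-order formulae in negation normal form over the vocabulary `(R, ar)`,
written with the *excluding* quantifiers `∃≠` (`exq`) and `∀≠` (`allq`) which range
only over elements distinct from the values of all variables currently in scope. -/
inductive FOx (R : Type) (ar : R → ℕ) : ℕ → Type
  | eq   : {i : ℕ} → Fin i → Fin i → FOx R ar i
  | ne   : {i : ℕ} → Fin i → Fin i → FOx R ar i
  | atom : {i : ℕ} → (r : R) → (Fin (ar r) → Fin i) → Bool → FOx R ar i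
  | or   : {i : ℕ} → FOx R ar i → FOx R ar i → FOx R ar i
  | and  : {i : ℕ} → FOx R ar i → FOx R ar i → FOx R ar i
  | exq  : {i : ℕ} → FOx R ar (i+1) → FOx R ar i
  | allq : {i : ℕ} → FOx R ar (i+1) → FOx R ar i

/-- The width of a formula: the maximal number of variables simultaneously in scope.
A formula `ψ : FOx R ar i` with `ψ.width ≤ k` is a formula of the `k`-variable
fragment `FO^k`. -/
def FOx.width : {i : ℕ} → FOx R ar i → ℕ
  | i, .eq _ _ => i
  | i, .ne _ _ => i
  | i, .atom _ _ _ => i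
  | _, .or φ θ => max φ.width θ.width
  | _, .and φ θ => max φ.width θ.width
  | _, .exq φ => φ.width
  | _, .allq φ => φ.width

/-- Semantics of formulae with excluding quantifiers in a lattice semiring. -/
noncomputable def evalLx [DistribLattice K] [BoundedOrder K] [Fintype A] [DecidableEq A]
    (π : Lit R ar A → K) : {i : ℕ} → FOx R ar i → (Fin i → A) → K
  | _, .eq j l, v => if v j = v l then ⊤ else ⊥
  | _, .ne j l, v => if v j = v l then ⊥ else ⊤
  | _, .atom r as pos, v => π ⟨r, fun j => v (as j), pos⟩
  | _, .or φ θ, v => evalLx π φ v ⊔ evalLx π θ v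
  | _, .and φ θ, v => evalLx π φ v ⊓ evalLx π θ v
  | _, .exq φ, v => (Finset.univ.filter fun b : A => ∀ j, v j ≠ b).sup
      fun b => evalLx π φ (Fin.snoc v b)
  | _, .allq φ, v => (Finset.univ.filter fun b : A => ∀ j, v j ≠ b).inf
      fun b => evalLx π φ (Fin.snoc v b)

/-- Semantics of formulae with excluding quantifiers in a commutative semiring. -/
noncomputable def evalSx [CommSemiring K] [Fintype A] [DecidableEq A]
    (π : Lit R ar A → K) : {i : ℕ} → FOx R ar i → (Fin i → A) → K
  | _, .eq j l, v => if v j = v l then 1 else 0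
  | _, .ne j l, v => if v j = v l then 0 else 1
  | _, .atom r as pos, v => π ⟨r, fun j => v (as j), pos⟩
  | _, .or φ θ, v => evalSx π φ v + evalSx π θ v
  | _, .and φ θ, v => evalSx π φ v * evalSx π θ v
  | _, .exq φ, v => ∑ b ∈ (Finset.univ.filter fun b : A => ∀ j, v j ≠ b),
      evalSx π φ (Fin.snoc v b)
  | _, .allq φ, v => ∏ b ∈ (Finset.univ.filter fun b : A => ∀ j, v j ≠ b),
      evalSx π φ (Fin.snoc v b)

/-- Extension of an assignment of values to the literals in variables `x_1, …, x_i`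
to the literals in variables `x_1, …, x_{i+1}`: a literal not containing the new
variable keeps its value under `ρ`, a literal containing the new variable gets its
value from `s`. -/
def extendA {i : ℕ} (ρ : Lit R ar (Fin i) → K) (s : Lit R ar (Fin (i+1)) → K) :
    Lit R ar (Fin (i+1)) → K := fun l =>
  if h : ∀ j, l.args j ≠ Fin.last i
  then ρ ⟨l.rel, fun j => (l.args j).castPred (h j), l.pos⟩
  else s l

/-- Evaluation (in a lattice semiring `K`, with the distinguished element `ε` as
value of `e`) of the polynomial `f_ψ` over the three-element semiring
`E = ({0,e,1}, +, ·)` associated with a formula `ψ` with excluding quantifiers: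
at an existential quantifier we take the supremum over all consistent selector
functions of new literals into `{0,1}`, at a universal quantifier the infimum over
all consistent selector functions into `{0,e}` (selector functions are presented by
maps `s` from the new atoms to `Bool`, telling which of the two complementary
literals is nonzero; the value `f_ψ[ρ]` only depends on their action on the new
literals). -/
noncomputable def fEval [DistribLattice K] [BoundedOrder K] [Fintype R] [DecidableEq R]
    (ε : K) : {i : ℕ} → FOx R ar i → (Lit R ar (Fin i) → K) → K
  | _, .eq j l, _ => if j = l then ⊤ else ⊥
  | _, .ne j l, _ => if j = l then ⊥ else ⊤
  | _, .atom r as pos, ρ => ρ ⟨r, as, pos⟩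
  | _, .or φ θ, ρ => fEval ε φ ρ ⊔ fEval ε θ ρ
  | _, .and φ θ, ρ => fEval ε φ ρ ⊓ fEval ε θ ρ
  | i, .exq φ, ρ => Finset.univ.sup fun s : Atoms R ar (Fin (i+1)) → Bool =>
      fEval ε φ (extendA ρ fun l => if s ⟨l.rel, l.args⟩ = l.pos then ⊤ else ⊥)
  | i, .allq φ, ρ => Finset.univ.inf fun s : Atoms R ar (Fin (i+1)) → Bool =>
      fEval ε φ (extendA ρ fun l => if s ⟨l.rel, l.args⟩ = l.pos then ε else ⊥)
/-- The smallest positive element `ε_K = ⨅ {j ∈ K : j ≠ 0}` of a finite lattice semiring. -/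
noncomputable def epsK (K : Type) [DistribLattice K] [BoundedOrder K] [Fintype K]
    [DecidableEq K] : K :=
  (Finset.univ.filter fun j : K => j ≠ ⊥).inf id

/-- A literal over the variables `x_1, …, x_{m+1}` containing the new variable `x_{m+1}`. -/
def NewLit {m : ℕ} (l : Lit R ar (Fin (m+1))) : Prop := ∃ j, l.args j = Fin.last m

/-- `ρp` is a maximal extension of `ρ`: all new literals get values in `{0,1} = {⊥,⊤}`. -/
def MaxExt [Lattice K] [BoundedOrder K] {m : ℕ}
    (ρp : Lit R ar (Fin (m+1)) → K) (ρ : Lit R ar (Fin m) → K) : Prop :=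
  Extends ρp ρ ∧ ∀ l : Lit R ar (Fin (m+1)), NewLit l → (ρp l = ⊥ ∨ ρp l = ⊤)

/-- `ρm` is a `δ`-small extension of `ρ`: all new literals get values `≤ δ`. -/
def SmallExt [Lattice K] [BoundedOrder K] {m : ℕ} (δ : K)
    (ρm : Lit R ar (Fin (m+1)) → K) (ρ : Lit R ar (Fin m) → K) : Prop :=
  Extends ρm ρ ∧ ∀ l : Lit R ar (Fin (m+1)), NewLit l → ρm l ≤ δ

/-- The `(k,δ)`-extension property: every maximal extension of the type of a tuple is
realised, and also some `δ`-small extension below it is realised. -/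
def ExtPropKD [Lattice K] [BoundedOrder K] (π : Lit R ar A → K) (k : ℕ) (δ : K) : Prop :=
  ∀ m, m < k → ∀ a : Fin m → A, Function.Injective a →
    ∀ ρp : Lit R ar (Fin (m+1)) → K, ModelDefining ⊥ ρp → MaxExt ρp (typeOf π a) →
      (∃ b : A, b ∉ Set.range a ∧ typeOf π (Fin.snoc a b) = ρp) ∧
      (∃ c : A, c ∉ Set.range a ∧ ModelDefining ⊥ (typeOf π (Fin.snoc a c)) ∧
        typeOf π (Fin.snoc a c) ≤ ρp ∧ SmallExt δ (typeOf π (Fin.snoc a c)) (typeOf π a))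

/-- `p` is weakly `ε`-bounded. -/
def WeaklyBounded [Lattice K] [BoundedOrder K] [MeasurableSpace K]
    (p : Measure K) (ε : K) : Prop :=
  0 < p {ε} ∧ ∀ δ : K, δ ≠ ⊥ → ¬ ε ≤ δ → p {x : K | ⊥ < x ∧ x ≤ δ} = 0

/-- `p` is strictly `ε`-bounded. -/
def StrictlyBounded [Lattice K] [BoundedOrder K] [MeasurableSpace K]
    (p : Measure K) (ε : K) : Prop :=
  (∀ ε' : K, ¬ WeaklyBounded p ε') ∧ p {x : K | ⊥ < x ∧ x ≤ ε} = 0 ∧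
    ∀ δ : K, ε < δ → 0 < p {x : K | ⊥ < x ∧ x ≤ δ}

/-- `p` is `ε`-bounded on small semiring values. -/
def EpsBounded [Lattice K] [BoundedOrder K] [MeasurableSpace K]
    (p : Measure K) (ε : K) : Prop :=
  WeaklyBounded p ε ∨ StrictlyBounded p ε

/-- `δ ∈ K⁺` is `p`-relevant (w.r.t. the parameter `ε` of the `ε`-bounded measure `p`). -/
def PRelevant [Lattice K] [BoundedOrder K] [MeasurableSpace K]
    (p : Measure K) (ε δ : K) : Prop :=
  δ ≠ ⊥ ∧ (ε < δ ∨ (0 < p {ε} ∧ δ = ε))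

/-- An interval of `K`: a closed, open, or half-open order interval. -/
def IsInterval [Lattice K] (J : Set K) : Prop :=
  ∃ a b : K, J = Set.Icc a b ∨ J = Set.Ico a b ∨ J = Set.Ioc a b ∨ J = Set.Ioo a b

section Aux

set_option linter.unusedSectionVars false

variable {R : Type} [Fintype R] [DecidableEq R] {ar : R → ℕ}
variable {K : Type} [DistribLattice K] [BoundedOrder K]

lemma FOx.le_width : ∀ {i : ℕ} (φ : FOx R ar i), i ≤ φ.width := by
  intro i φ
  induction φ with
  | eq j l => exact le_rfl
  | ne j l => exact le_rfl
  | atom r as p => exact le_rfl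
  | or φ θ ih₁ ih₂ => exact ih₁.trans (le_max_left _ _)
  | and φ θ ih₁ ih₂ => exact ih₁.trans (le_max_left _ _)
  | exq φ ih => exact (Nat.le_succ _).trans ih
  | allq φ ih => exact (Nat.le_succ _).trans ih

lemma extendA_mono {i : ℕ} {ρ₁ ρ₂ : Lit R ar (Fin i) → K} (h : ∀ l, ρ₁ l ≤ ρ₂ l)
    (s : Lit R ar (Fin (i+1)) → K) (l : Lit R ar (Fin (i+1))) :
    extendA ρ₁ s l ≤ extendA ρ₂ s l := by
  unfold extendA
  split
  · exact h _
  · exact le_rfl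

lemma fEval_mono (ε : K) : ∀ {i : ℕ} (φ : FOx R ar i) {ρ₁ ρ₂ : Lit R ar (Fin i) → K},
    (∀ l, ρ₁ l ≤ ρ₂ l) → fEval ε φ ρ₁ ≤ fEval ε φ ρ₂ := by
  intro i φ
  induction φ with
  | eq j l => intro ρ₁ ρ₂ h; exact le_rfl
  | ne j l => intro ρ₁ ρ₂ h; exact le_rfl
  | atom r as p => intro ρ₁ ρ₂ h; exact h _
  | or φ θ ih₁ ih₂ => intro ρ₁ ρ₂ h; exact sup_le_sup (ih₁ h) (ih₂ h)
  | and φ θ ih₁ ih₂ => intro ρ₁ ρ₂ h; exact inf_le_inf (ih₁ h) (ih₂ h)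
  | exq φ ih =>
    intro ρ₁ ρ₂ h
    exact Finset.sup_mono_fun fun s _ => ih fun l => extendA_mono h _ l
  | allq φ ih =>
    intro ρ₁ ρ₂ h
    exact Finset.inf_mono_fun fun s _ => ih fun l => extendA_mono h _ l

/-- A function `K → K` of the form `κ ↦ c ⊔ (κ ⊓ d)` with `c ≤ d`
(a monotone unary lattice polynomial in normal form). -/
def LinIn (g : K → K) : Prop := ∃ c d : K, c ≤ d ∧ ∀ κ, g κ = c ⊔ (κ ⊓ d)

lemma LinIn.const (c : K) : LinIn (fun _ => c) :=
  ⟨c, c, le_rfl, fun κ => (sup_eq_left.2 inf_le_right).symm⟩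

lemma LinIn.id' : LinIn (fun κ : K => κ) :=
  ⟨⊥, ⊤, bot_le, fun κ => by show κ = ⊥ ⊔ κ ⊓ ⊤; simp⟩

lemma LinIn.sup {g₁ g₂ : K → K} (h₁ : LinIn g₁) (h₂ : LinIn g₂) :
    LinIn (fun κ => g₁ κ ⊔ g₂ κ) := by
  obtain ⟨c₁, d₁, hc₁, e₁⟩ := h₁
  obtain ⟨c₂, d₂, hc₂, e₂⟩ := h₂
  refine ⟨c₁ ⊔ c₂, d₁ ⊔ d₂, sup_le_sup hc₁ hc₂, fun κ => ?_⟩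
  show g₁ κ ⊔ g₂ κ = _
  rw [e₁, e₂, inf_sup_left, sup_sup_sup_comm]

lemma LinIn.inf {g₁ g₂ : K → K} (h₁ : LinIn g₁) (h₂ : LinIn g₂) :
    LinIn (fun κ => g₁ κ ⊓ g₂ κ) := by
  obtain ⟨c₁, d₁, hc₁, e₁⟩ := h₁
  obtain ⟨c₂, d₂, hc₂, e₂⟩ := h₂
  refine ⟨c₁ ⊓ c₂, d₁ ⊓ d₂, inf_le_inf hc₁ hc₂, fun κ => ?_⟩
  show g₁ κ ⊓ g₂ κ = _
  rw [e₁, e₂]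
  apply le_antisymm
  · rw [inf_sup_right, inf_sup_left, inf_sup_left]
    refine sup_le (sup_le ?_ ?_) (sup_le ?_ ?_)
    · exact le_sup_left
    · exact le_sup_of_le_right (le_inf (inf_le_right.trans inf_le_left)
        (le_inf (inf_le_left.trans hc₁) (inf_le_right.trans inf_le_right)))
    · exact le_sup_of_le_right (le_inf (inf_le_left.trans inf_le_left)
        (le_inf (inf_le_left.trans inf_le_right) (inf_le_right.trans hc₂)))
    · exact le_sup_of_le_right (le_inf (inf_le_left.trans inf_le_left)
        (le_inf (inf_le_left.trans inf_le_right) (inf_le_right.trans inf_le_right)))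
  · refine sup_le (le_inf ?_ ?_) (le_inf ?_ ?_)
    · exact le_sup_of_le_left inf_le_left
    · exact le_sup_of_le_left inf_le_right
    · exact le_sup_of_le_right (inf_le_inf_left _ inf_le_left)
    · exact le_sup_of_le_right (inf_le_inf_left _ inf_le_right)

lemma LinIn.finsetSup {ι : Type*} (s : Finset ι) (f : ι → K → K)
    (h : ∀ x ∈ s, LinIn (f x)) : LinIn (fun κ => s.sup (f · κ)) := by
  induction s using Finset.cons_induction with
  | empty => simpa using LinIn.const (⊥ : K)
  | cons x s hx ih =>
    simp only [Finset.sup_cons]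
    exact (h x (Finset.mem_cons_self x s)).sup
      (ih fun y hy => h y (Finset.mem_cons.2 (Or.inr hy)))

lemma LinIn.finsetInf {ι : Type*} (s : Finset ι) (f : ι → K → K)
    (h : ∀ x ∈ s, LinIn (f x)) : LinIn (fun κ => s.inf (f · κ)) := by
  induction s using Finset.cons_induction with
  | empty => simpa using LinIn.const (⊤ : K)
  | cons x s hx ih =>
    simp only [Finset.inf_cons]
    exact (h x (Finset.mem_cons_self x s)).inf
      (ih fun y hy => h y (Finset.mem_cons.2 (Or.inr hy)))

/-- `fEval` applied along a family of types whose coordinates are each constant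
or the identity in the parameter `κ` is a monotone unary lattice polynomial. -/
lemma fEval_linIn (ε : K) : ∀ {i : ℕ} (φ : FOx R ar i) (ρκ : K → Lit R ar (Fin i) → K),
    (∀ l, (∀ κ, ρκ κ l = ρκ ⊥ l) ∨ (∀ κ, ρκ κ l = κ)) →
    LinIn (fun κ => fEval ε φ (ρκ κ)) := by
  intro i φ
  induction φ with
  | eq j l => intro ρκ h; exact LinIn.const _
  | ne j l => intro ρκ h; exact LinIn.const _
  | atom r as p =>
    intro ρκ h
    rcases h ⟨r, as, p⟩ with hc | hi
    · simp only [fEval]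
      exact ⟨ρκ ⊥ ⟨r, as, p⟩, ρκ ⊥ ⟨r, as, p⟩, le_rfl, fun κ => by
        show ρκ κ ⟨r, as, p⟩ = _
        rw [hc κ]
        exact (sup_eq_left.2 inf_le_right).symm⟩
    · simp only [fEval]
      exact ⟨⊥, ⊤, bot_le, fun κ => by show ρκ κ ⟨r, as, p⟩ = _; rw [hi κ]; simp⟩
  | or φ θ ih₁ ih₂ => intro ρκ h; exact (ih₁ ρκ h).sup (ih₂ ρκ h)
  | and φ θ ih₁ ih₂ => intro ρκ h; exact (ih₁ ρκ h).inf (ih₂ ρκ h)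
  | exq φ ih =>
    intro ρκ h
    simp only [fEval]
    refine LinIn.finsetSup _ _ fun s _ => ih _ fun l => ?_
    unfold extendA
    split
    · rcases h _ with hc | hi
      · exact Or.inl fun κ => hc κ
      · exact Or.inr fun κ => hi κ
    · exact Or.inl fun κ => rfl
  | allq φ ih =>
    intro ρκ h
    simp only [fEval]
    refine LinIn.finsetInf _ _ fun s _ => ih _ fun l => ?_
    unfold extendA
    split
    · rcases h _ with hc | hi
      · exact Or.inl fun κ => hc κ
      · exact Or.inr fun κ => hi κ
    · exact Or.inl fun κ => rfl

variable [Fintype K] [DecidableEq K]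

lemma epsK_le {x : K} (hx : x ≠ ⊥) : epsK K ≤ x := by
  have hm : x ∈ Finset.univ.filter (fun j : K => j ≠ ⊥) := by simp [hx]
  exact Finset.inf_le (f := id) hm

lemma inf_nonzeros [Nontrivial K] {g : K → K} (hg : LinIn g) :
    (Finset.univ.filter fun j : K => j ≠ ⊥).inf g = g (epsK K) := by
  obtain ⟨c, d, hcd, hge⟩ := hg
  have htop : (⊤ : K) ∈ Finset.univ.filter fun j : K => j ≠ ⊥ := by
    simp [top_ne_bot]
  apply le_antisymm
  · have h1 : (Finset.univ.filter fun j : K => j ≠ ⊥).inf g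
        = c ⊔ (Finset.univ.filter fun j : K => j ≠ ⊥).inf (fun κ => κ ⊓ d) := by
      rw [Finset.inf_sup_distrib_left]
      exact Finset.inf_congr rfl fun κ _ => hge κ
    rw [h1, hge]
    refine sup_le_sup_left (le_inf ?_ ?_) c
    · refine le_trans (Finset.inf_mono_fun fun κ _ => inf_le_left) ?_
      exact le_of_eq (Finset.inf_congr rfl fun κ _ => rfl)
    · exact (Finset.inf_le htop).trans inf_le_right
  · refine Finset.le_inf fun κ hκ => ?_
    have hκb : κ ≠ ⊥ := (Finset.mem_filter.1 hκ).2
    rw [hge, hge]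
    exact sup_le_sup_left (inf_le_inf_right d (epsK_le hκb)) c

lemma snoc_inj {A : Type} {m : ℕ} {a : Fin m → A} (ha : Function.Injective a) {b : A}
    (hb : b ∉ Set.range a) : Function.Injective (Fin.snoc a b) := by
  intro x y hxy
  induction x using Fin.lastCases with
  | last =>
    induction y using Fin.lastCases with
    | last => rfl
    | cast y' =>
      rw [Fin.snoc_last, Fin.snoc_castSucc] at hxy
      exact absurd ⟨y', hxy.symm⟩ hb
  | cast x' =>
    induction y using Fin.lastCases with
    | last =>
      rw [Fin.snoc_last, Fin.snoc_castSucc] at hxy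
      exact absurd ⟨x', hxy⟩ hb
    | cast y' =>
      rw [Fin.snoc_castSucc, Fin.snoc_castSucc] at hxy
      exact congrArg Fin.castSucc (ha hxy)

lemma typeOf_md {A : Type} {π : Lit R ar A → K} (hmd : ModelDefining (⊥ : K) π)
    {m : ℕ} (a : Fin m → A) : ModelDefining (⊥ : K) (typeOf π a) :=
  fun r as => hmd r fun j => a (as j)

lemma typeOf_snoc_old {A : Type} (π : Lit R ar A → K) {i : ℕ} (a : Fin i → A) (b : A)
    (l : Lit R ar (Fin (i+1))) (h : ∀ j, l.args j ≠ Fin.last i) :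
    typeOf π (Fin.snoc a b) l
      = typeOf π a ⟨l.rel, fun j => (l.args j).castPred (h j), l.pos⟩ := by
  have harg : (fun j => (Fin.snoc a b : Fin (i+1) → A) (l.args j))
      = fun j => a ((l.args j).castPred (h j)) := by
    funext j
    conv_lhs => rw [← Fin.castSucc_castPred (l.args j) (h j)]
    rw [Fin.snoc_castSucc]
  exact congrArg (fun f => π ⟨l.rel, f, l.pos⟩) harg

lemma extendA_extends {i : ℕ} (ρ : Lit R ar (Fin i) → K) (sm : Lit R ar (Fin (i+1)) → K) :
    Extends (extendA ρ sm) ρ := by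
  intro l
  have h : ∀ j, (Lit.map Fin.castSucc l).args j ≠ Fin.last i :=
    fun j => (Fin.castSucc_lt_last _).ne
  show extendA ρ sm (Lit.map Fin.castSucc l) = ρ l
  rw [extendA, dif_pos h]
  have harg : (fun j => ((Lit.map Fin.castSucc l).args j).castPred (h j)) = l.args := by
    funext j
    exact Fin.castPred_castSucc _
  show ρ ⟨l.rel, _, l.pos⟩ = ρ l
  rw [harg]

lemma extendA_md {i : ℕ} {ρ : Lit R ar (Fin i) → K} (hρ : ModelDefining (⊥ : K) ρ)
    (s : Atoms R ar (Fin (i+1)) → Bool) (v : K) (hv : v ≠ ⊥) :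
    ModelDefining (⊥ : K)
      (extendA ρ fun l => if s ⟨l.rel, l.args⟩ = l.pos then v else ⊥) := by
  intro r as
  by_cases h : ∀ j, as j ≠ Fin.last i
  · show (extendA ρ _ ⟨r, as, true⟩ = ⊥) ↔ (extendA ρ _ ⟨r, as, false⟩ ≠ ⊥)
    rw [extendA, extendA, dif_pos h, dif_pos h]
    exact hρ _ _
  · show (extendA ρ _ ⟨r, as, true⟩ = ⊥) ↔ (extendA ρ _ ⟨r, as, false⟩ ≠ ⊥)
    rw [extendA, extendA, dif_neg h, dif_neg h]
    cases hs : s ⟨r, as⟩ <;> simp [hs, hv]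

end Aux

section Main

set_option linter.unusedSectionVars false
set_option maxHeartbeats 1000000

variable {R : Type} [Fintype R] [DecidableEq R] {ar : R → ℕ}
variable {K : Type} [DistribLattice K] [BoundedOrder K] [Fintype K] [DecidableEq K]
variable {A : Type} [Fintype A] [DecidableEq A]

lemma main_aux (k : ℕ) (π : Lit R ar A → K) (hmd : ModelDefining (⊥ : K) π)
    (hext : ExtProp (⊥ : K) π k) :
    ∀ {i : ℕ} (ψ : FOx R ar i), ψ.width ≤ k → ∀ a : Fin i → A, Function.Injective a →
      evalLx π ψ a = fEval (epsK K) ψ (typeOf π a) := by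
  rcases subsingleton_or_nontrivial K with hK | hK
  · intro i ψ hw a ha; exact Subsingleton.elim _ _
  intro i ψ
  induction ψ with
  | eq j l =>
    intro hw a ha
    simp only [evalLx, fEval]
    by_cases h : j = l
    · simp [h]
    · have hne : a j ≠ a l := fun he => h (ha he)
      simp [h, hne]
  | ne j l =>
    intro hw a ha
    simp only [evalLx, fEval]
    by_cases h : j = l
    · simp [h]
    · have hne : a j ≠ a l := fun he => h (ha he)
      simp [h, hne]
  | atom r as p => intro hw a ha; rfl
  | or φ θ ih₁ ih₂ =>
    intro hw a ha
    simp only [evalLx, fEval, FOx.width, max_le_iff] at *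
    rw [ih₁ hw.1 a ha, ih₂ hw.2 a ha]
  | and φ θ ih₁ ih₂ =>
    intro hw a ha
    simp only [evalLx, fEval, FOx.width, max_le_iff] at *
    rw [ih₁ hw.1 a ha, ih₂ hw.2 a ha]
  | exq φ ih =>
    rename_i i
    intro hw a ha
    have hwφ : φ.width ≤ k := hw
    have hik : i < k :=
      lt_of_lt_of_le (Nat.lt_of_lt_of_le (Nat.lt_succ_self i) (FOx.le_width φ)) hwφ
    simp only [evalLx, fEval]
    apply le_antisymm
    · refine Finset.sup_le fun b hb => ?_
      have hbr : b ∉ Set.range a := by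
        rcases Finset.mem_filter.1 hb with ⟨-, h2⟩
        rintro ⟨j, rfl⟩; exact h2 j rfl
      have hbi := snoc_inj ha hbr
      rw [ih hwφ _ hbi]
      set s₀ : Atoms R ar (Fin (i+1)) → Bool :=
        fun t => decide (π ⟨t.1, fun j => (Fin.snoc a b : Fin (i+1) → A) (t.2 j), true⟩ ≠ ⊥)
        with hs₀
      refine le_trans (fEval_mono (epsK K) φ
          (ρ₂ := extendA (typeOf π a) fun l => if s₀ ⟨l.rel, l.args⟩ = l.pos then ⊤ else ⊥) ?_)
        (Finset.le_sup (f := fun s : Atoms R ar (Fin (i+1)) → Bool => fEval (epsK K) φ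
          (extendA (typeOf π a) fun l => if s ⟨l.rel, l.args⟩ = l.pos then ⊤ else ⊥))
          (Finset.mem_univ s₀))
      intro l
      by_cases h : ∀ j, l.args j ≠ Fin.last i
      · rw [typeOf_snoc_old π a b l h, extendA, dif_pos h]
      · rw [extendA, dif_neg h]
        obtain ⟨r, as, p⟩ := l
        by_cases hc : s₀ ⟨r, as⟩ = p
        · rw [if_pos hc]; exact le_top
        · rw [if_neg hc]
          have hmd' := hmd r fun j => (Fin.snoc a b : Fin (i+1) → A) (as j)
          cases p with
          | true =>
            have ht : π ⟨r, fun j => (Fin.snoc a b : Fin (i+1) → A) (as j), true⟩ = ⊥ := by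
              simpa [hs₀] using hc
            exact le_of_eq ht
          | false =>
            have ht : π ⟨r, fun j => (Fin.snoc a b : Fin (i+1) → A) (as j), true⟩ ≠ ⊥ := by
              simpa [hs₀] using hc
            have ht' : π ⟨r, fun j => (Fin.snoc a b : Fin (i+1) → A) (as j), false⟩ = ⊥ := by
              by_contra h'
              exact ht (hmd'.mpr h')
            exact le_of_eq ht'
    · refine Finset.sup_le fun s _ => ?_
      have hmdρ := typeOf_md (K := K) hmd a
      have hmdp := extendA_md hmdρ s ⊤ top_ne_bot
      obtain ⟨b, hbr, hbi, hbt⟩ :=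
        hext i hik (typeOf π a) hmdρ _ hmdp (extendA_extends _ _) a ⟨ha, rfl⟩
      rw [← hbt, ← ih hwφ _ hbi]
      have hbm : b ∈ Finset.univ.filter fun b : A => ∀ j, a j ≠ b := by
        simp only [Finset.mem_filter, Finset.mem_univ, true_and]
        exact fun j hj => hbr ⟨j, hj⟩
      exact Finset.le_sup (f := fun b => evalLx π φ (Fin.snoc a b)) hbm
  | allq φ ih =>
    rename_i i
    intro hw a ha
    have hwφ : φ.width ≤ k := hw
    have hik : i < k :=
      lt_of_lt_of_le (Nat.lt_of_lt_of_le (Nat.lt_succ_self i) (FOx.le_width φ)) hwφ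
    simp only [evalLx, fEval]
    apply le_antisymm
    · refine Finset.le_inf fun s _ => ?_
      have hlin : LinIn (fun κ => fEval (epsK K) φ
          (extendA (typeOf π a) fun l => if s ⟨l.rel, l.args⟩ = l.pos then κ else ⊥)) := by
        refine fEval_linIn _ φ _ fun l => ?_
        by_cases hl : ∀ j, l.args j ≠ Fin.last i
        · exact Or.inl fun κ => by rw [extendA, dif_pos hl, extendA, dif_pos hl]
        · by_cases hc : s ⟨l.rel, l.args⟩ = l.pos
          · exact Or.inr fun κ => by rw [extendA, dif_neg hl]; exact if_pos hc
          · exact Or.inl fun κ => by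
              rw [extendA, dif_neg hl, extendA, dif_neg hl, if_neg hc, if_neg hc]
      refine le_trans ?_ (le_of_eq (inf_nonzeros hlin))
      refine Finset.le_inf fun κ hκ => ?_
      have hκb : κ ≠ ⊥ := by simpa using (Finset.mem_filter.1 hκ).2
      have hmdρ := typeOf_md (K := K) hmd a
      have hmdp := extendA_md hmdρ s κ hκb
      obtain ⟨b, hbr, hbi, hbt⟩ :=
        hext i hik (typeOf π a) hmdρ _ hmdp (extendA_extends _ _) a ⟨ha, rfl⟩
      have hbm : b ∈ Finset.univ.filter fun b : A => ∀ j, a j ≠ b := by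
        simp only [Finset.mem_filter, Finset.mem_univ, true_and]
        exact fun j hj => hbr ⟨j, hj⟩
      refine le_trans (Finset.inf_le (f := fun b => evalLx π φ (Fin.snoc a b)) hbm)
        (le_of_eq ?_)
      show evalLx π φ (Fin.snoc a b) = fEval (epsK K) φ
        (extendA (typeOf π a) fun l => if s ⟨l.rel, l.args⟩ = l.pos then κ else ⊥)
      rw [ih hwφ _ hbi, hbt]
    · refine Finset.le_inf fun b hb => ?_
      have hbr : b ∉ Set.range a := by
        rcases Finset.mem_filter.1 hb with ⟨-, h2⟩
        rintro ⟨j, rfl⟩; exact h2 j rfl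
      have hbi := snoc_inj ha hbr
      rw [ih hwφ _ hbi]
      set s₀ : Atoms R ar (Fin (i+1)) → Bool :=
        fun t => decide (π ⟨t.1, fun j => (Fin.snoc a b : Fin (i+1) → A) (t.2 j), true⟩ ≠ ⊥)
        with hs₀
      refine le_trans (Finset.inf_le (f := fun s : Atoms R ar (Fin (i+1)) → Bool => fEval (epsK K) φ
          (extendA (typeOf π a) fun l => if s ⟨l.rel, l.args⟩ = l.pos then epsK K else ⊥))
          (Finset.mem_univ s₀))
        (fEval_mono (epsK K) φ
          (ρ₁ := extendA (typeOf π a) fun l => if s₀ ⟨l.rel, l.args⟩ = l.pos then epsK K else ⊥) ?_)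
      intro l
      by_cases h : ∀ j, l.args j ≠ Fin.last i
      · rw [typeOf_snoc_old π a b l h, extendA, dif_pos h]
      · rw [extendA, dif_neg h]
        obtain ⟨r, as, p⟩ := l
        by_cases hc : s₀ ⟨r, as⟩ = p
        · rw [if_pos hc]
          apply epsK_le
          have hmd' := hmd r fun j => (Fin.snoc a b : Fin (i+1) → A) (as j)
          cases p with
          | true =>
            have ht : π ⟨r, fun j => (Fin.snoc a b : Fin (i+1) → A) (as j), true⟩ ≠ ⊥ := by
              simpa [hs₀] using hc
            exact ht
          | false =>
            have ht : π ⟨r, fun j => (Fin.snoc a b : Fin (i+1) → A) (as j), true⟩ = ⊥ := by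
              simpa [hs₀] using hc
            exact hmd'.mp ht
        · rw [if_neg hc]; exact bot_le

end Main

/-- Let `K` be a finite lattice semiring (a finite bounded
distributive lattice, with `0 = ⊥`, `1 = ⊤`, addition `⊔`, multiplication `⊓`).
For every `K`-interpretation `π` with the `k`-extension property, every formula
`ψ(x_1,…,x_i) ∈ FO^k` (in NNF, with excluding quantifiers, using at most `k`
variables) and every tuple `ā` of pairwise distinct elements,
`π⟦ψ(ā)⟧ = f_ψ[ρ^π_ā]`, where the polynomial `f_ψ` is evaluated with `e ↦ ε_K`
and `X_β ↦ ρ^π_ā(β)`. -/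
theorem statement_1
    {R : Type} [Fintype R] [DecidableEq R] {ar : R → ℕ}
    {K : Type} [DistribLattice K] [BoundedOrder K] [Fintype K] [DecidableEq K]
    {A : Type} [Fintype A] [DecidableEq A]
    (k : ℕ) (π : Lit R ar A → K) (hmd : ModelDefining (⊥ : K) π)
    (hext : ExtProp (⊥ : K) π k)
    {i : ℕ} (ψ : FOx R ar i) (hw : ψ.width ≤ k)
    (a : Fin i → A) (ha : Function.Injective a) :
    evalLx π ψ a = fEval (epsK K) ψ (typeOf π a) :=
  main_aux k π hmd hext ψ hw a ha
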